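/- Let R be an m×n 0-1 matrix such that every row ℓ whose support L_ℓ has size 2 corresponds to an edge of at most one 0-strong odd cycle, the 0-strong odd cycles are pairwise label-disjoint, and suppose x_disc∈{−1,+1}ⁿ satisfies: |[R x_disc]_ℓ| ≤ 1 for every label ℓ not removed in breaking the 0-strong odd cycles, and |[R x_disc]_ℓ| = 2 for exactly one weak label per 0-strong odd cycle. Then ‖R x_disc‖² ≤ ‖R x‖² for all x∈{−1,+1}ⁿ, i.e., x_disc attains the maximum cut of the weighted intersection graph of R. -/

import Mathlib

open Finset Matrix

/-- Sum of ±1 values over a finset, as difference of two counts. -/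
lemma stmt19_sum_pm {n : ℕ} (x : Fin n → ℝ) (hx : ∀ i, x i = 1 ∨ x i = -1)
    (L : Finset (Fin n)) :
    ∃ a b : ℕ, a + b = L.card ∧ (∑ v ∈ L, x v) = (a : ℝ) - b := by
  refine ⟨(L.filter (fun v => x v = 1)).card, (L.filter (fun v => ¬ x v = 1)).card,
    Finset.card_filter_add_card_filter_not _, ?_⟩
  rw [← Finset.sum_filter_add_sum_filter_not L (fun v => x v = 1) x]
  have e1 : ∑ v ∈ L.filter (fun v => x v = 1), x v
      = ((L.filter (fun v => x v = 1)).card : ℝ) := by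
    rw [Finset.sum_congr rfl (fun v hv => (Finset.mem_filter.mp hv).2)]
    simp
  have e2 : ∑ v ∈ L.filter (fun v => ¬ x v = 1), x v
      = -((L.filter (fun v => ¬ x v = 1)).card : ℝ) := by
    have : ∀ v ∈ L.filter (fun v => ¬ x v = 1), x v = -1 := by
      intro v hv
      rcases hx v with h | h
      · exact absurd h (Finset.mem_filter.mp hv).2
      · exact h
    rw [Finset.sum_congr rfl this]
    simp
  rw [e1, e2]; ring

lemma stmt19_odd_lb {n : ℕ} (x : Fin n → ℝ) (hx : ∀ i, x i = 1 ∨ x i = -1)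
    (L : Finset (Fin n)) (hodd : Odd L.card) : 1 ≤ (∑ v ∈ L, x v) ^ 2 := by
  obtain ⟨a, b, hab, hs⟩ := stmt19_sum_pm x hx L
  rw [hs]
  have hne : a ≠ b := by
    rintro rfl
    exact (Nat.not_odd_iff_even.mpr ⟨a, by omega⟩) (hab ▸ hodd)
  have : (1 : ℝ) ≤ |(a : ℝ) - b| := by
    have : ((a : ℤ) - b) ≠ 0 := by
      intro h; exact hne (by omega)
    calc (1:ℝ) = ((1:ℤ):ℝ) := by norm_num
    _ ≤ |(((a:ℤ) - b : ℤ) : ℝ)| := by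
        rw [← Int.cast_abs]; exact_mod_cast Int.one_le_abs this
    _ = |(a:ℝ) - b| := by push_cast; ring_nf
  calc (1:ℝ) = 1^2 := by norm_num
  _ ≤ |(a:ℝ) - b|^2 := by apply pow_le_pow_left₀ (by norm_num) this
  _ = ((a:ℝ) - b)^2 := sq_abs _

lemma stmt19_even_zero {n : ℕ} (x : Fin n → ℝ) (hx : ∀ i, x i = 1 ∨ x i = -1)
    (L : Finset (Fin n)) (heven : ¬ Odd L.card) (hle : |∑ v ∈ L, x v| ≤ 1) :
    (∑ v ∈ L, x v) = 0 := by
  obtain ⟨a, b, hab, hs⟩ := stmt19_sum_pm x hx L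
  rw [hs] at hle ⊢
  have hE : (a + b) % 2 = 0 := Nat.even_iff.mp (hab ▸ Nat.not_odd_iff_even.mp heven)
  obtain ⟨hle1, hle2⟩ := abs_le.mp hle
  have c1 : (-1 : ℤ) ≤ (a:ℤ) - b := by exact_mod_cast hle1
  have c2 : (a:ℤ) - b ≤ 1 := by exact_mod_cast hle2
  have : a = b := by omega
  rw [this]; ring

/-- An odd cycle has a monochromatic edge. -/
lemma stmt19_cycle {k : ℕ} (hodd : Odd k) (y : Fin k → ℝ)
    (hy : ∀ i, y i = 1 ∨ y i = -1) : ∃ i, y i = y (finRotate k i) := by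
  by_contra hno
  push_neg at hno
  have hprod : ∀ i, y i * y (finRotate k i) = -1 := by
    intro i
    rcases hy i with h | h <;> rcases hy (finRotate k i) with h' | h'
    · exact absurd (h.trans h'.symm) (hno i)
    · rw [h, h']; ring
    · rw [h, h']; ring
    · exact absurd (h.trans h'.symm) (hno i)
  have h1 : ∏ i, (y i * y (finRotate k i)) = (-1 : ℝ) ^ k := by
    rw [Finset.prod_congr rfl (fun i _ => hprod i)]
    simp
  have h2 : ∏ i, (y i * y (finRotate k i)) = (∏ i, y i) ^ 2 := by
    rw [Finset.prod_mul_distrib, Equiv.prod_comp (finRotate k) y, sq]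
  rw [h2, hodd.neg_one_pow] at h1
  nlinarith [sq_nonneg (∏ i, y i)]

lemma stmt19_rot_ne {k : ℕ} (hk : 2 ≤ k) (i : Fin k) : finRotate k i ≠ i := by
  match k, hk with
  | (k+2), _ =>
    rw [finRotate_succ_apply]
    intro h
    have hv := congrArg Fin.val h
    rw [Fin.val_add_one] at hv
    rcases eq_or_ne i (Fin.last (k+1)) with hl | hl
    · rw [if_pos hl] at hv
      rw [hl] at hv
      simp [Fin.last] at hv
    · rw [if_neg hl] at hv
      omega

lemma stmt19_rowval {m n : ℕ} (R : Matrix (Fin m) (Fin n) ℝ)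
    (hR : ∀ ℓ v, R ℓ v = 0 ∨ R ℓ v = 1) (x : Fin n → ℝ) (ℓ : Fin m) :
    R.mulVec x ℓ = ∑ v ∈ Finset.univ.filter (fun v => R ℓ v = 1), x v := by
  rw [Finset.sum_filter, Matrix.mulVec, dotProduct]
  apply Finset.sum_congr rfl
  intro v _
  rcases hR ℓ v with h | h <;> simp [h]

lemma stmt19_cut_id {m n : ℕ} (R : Matrix (Fin m) (Fin n) ℝ)
    (x : Fin n → ℝ) (hx : ∀ i, x i = 1 ∨ x i = -1) :
    ∑ ℓ, (R.mulVec x ℓ) ^ 2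
      = (∑ i, ∑ j, (Rᵀ * R) i j)
        - 4 * ∑ i, ∑ j, (if i < j ∧ x i ≠ x j then (Rᵀ * R) i j else 0) := by
  have hw : ∀ i j, (Rᵀ * R) i j = ∑ ℓ, R ℓ i * R ℓ j := by
    intro i j; simp [Matrix.mul_apply, Matrix.transpose_apply]
  have hsym : ∀ i j, (Rᵀ * R) j i = (Rᵀ * R) i j := by
    intro i j; rw [hw, hw]
    exact Finset.sum_congr rfl (fun ℓ _ => mul_comm _ _)
  have step1 : ∑ ℓ, (R.mulVec x ℓ) ^ 2
      = ∑ i, ∑ j, (Rᵀ * R) i j * (x i * x j) := by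
    have : ∀ ℓ, (R.mulVec x ℓ) ^ 2 = ∑ i, ∑ j, (R ℓ i * x i) * (R ℓ j * x j) := by
      intro ℓ
      rw [Matrix.mulVec, dotProduct, sq, Finset.sum_mul_sum]
    rw [Finset.sum_congr rfl (fun ℓ _ => this ℓ), Finset.sum_comm]
    apply Finset.sum_congr rfl; intro i _
    rw [Finset.sum_comm]
    apply Finset.sum_congr rfl; intro j _
    rw [hw, Finset.sum_mul]
    apply Finset.sum_congr rfl; intro ℓ _
    ring
  have step2 : ∀ i j, (Rᵀ * R) i j * (x i * x j)
      = (Rᵀ * R) i j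
        - 2 * (if i < j ∧ x i ≠ x j then (Rᵀ * R) i j else 0)
        - 2 * (if j < i ∧ x i ≠ x j then (Rᵀ * R) i j else 0) := by
    intro i j
    by_cases hne : x i = x j
    · rw [if_neg (by tauto), if_neg (by tauto)]
      have : x i * x j = 1 := by
        rcases hx i with h | h <;> rw [hne] at h ⊢ <;> rw [h] <;> norm_num
      rw [this]; ring
    · have hij : i ≠ j := by rintro rfl; exact hne rfl
      have hprod : x i * x j = -1 := by
        rcases hx i with h | h <;> rcases hx j with h' | h' <;>
          first
          | (exact absurd (h.trans h'.symm) hne)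
          | (rw [h, h']; norm_num)
      rcases lt_or_gt_of_ne hij with hlt | hgt
      · rw [if_pos ⟨hlt, hne⟩, if_neg (by simp [not_lt.mpr hlt.le])]
        rw [hprod]; ring
      · rw [if_neg (by simp [not_lt.mpr hgt.le]), if_pos ⟨hgt, hne⟩]
        rw [hprod]; ring
  have step3 : ∑ i, ∑ j, (if j < i ∧ x i ≠ x j then (Rᵀ * R) i j else 0)
      = ∑ i, ∑ j, (if i < j ∧ x i ≠ x j then (Rᵀ * R) i j else 0) := by
    rw [Finset.sum_comm]
    apply Finset.sum_congr rfl; intro i _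
    apply Finset.sum_congr rfl; intro j _
    have : (i < j ∧ x j ≠ x i) ↔ (i < j ∧ x i ≠ x j) := by
      constructor <;> rintro ⟨h1, h2⟩ <;> exact ⟨h1, h2.symm⟩
    rw [hsym]
    by_cases h : i < j ∧ x j ≠ x i
    · rw [if_pos h, if_pos (this.mp h)]
    · rw [if_neg h, if_neg (fun hh => h (this.mpr hh))]
  rw [step1]
  rw [Finset.sum_congr rfl (fun i _ => Finset.sum_congr rfl (fun j _ => step2 i j))]
  simp only [Finset.sum_sub_distrib, ← Finset.mul_sum]
  rw [step3]
  ring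

/-- Let `R` be a 0-1 matrix whose 0-strong odd cycles (odd cycles all of
whose edges come from weak labels, the label set `L ℓ` being exactly the two
endpoints) are pairwise label-disjoint. Suppose the sign vector `xd` satisfies
`|[R xd]_ℓ| ≤ 1` for every label `ℓ` other than the removed labels, and
`|[R xd]_ℓ| = 2` for exactly one weak label `lc c (e c)` per 0-strong odd cycle `c`.
Then `‖R xd‖² ≤ ‖R x‖²` for all `x ∈ {−1,+1}ⁿ`, i.e. `xd` attains the maximum cut of
the weighted intersection graph of `R`. -/
theorem stmt19 (m n t : ℕ)
    (R : Matrix (Fin m) (Fin n) ℝ) (hR : ∀ ℓ v, R ℓ v = 0 ∨ R ℓ v = 1)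
    (k : Fin t → ℕ) (hk : ∀ c, Odd (k c) ∧ 3 ≤ k c)
    (vc : (c : Fin t) → Fin (k c) → Fin n)
    (lc : (c : Fin t) → Fin (k c) → Fin m)
    (hvinj : ∀ c, Function.Injective (vc c))
    (hlinj : ∀ c, Function.Injective (lc c))
    (hweak : ∀ c i, Finset.univ.filter (fun v => R (lc c i) v = 1)
        = {vc c i, vc c (finRotate (k c) i)})
    (hldisj : ∀ (c c' : Fin t) (i : Fin (k c)) (i' : Fin (k c')),
        lc c i = lc c' i' → c = c')
    (e : (c : Fin t) → Fin (k c))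
    (xd : Fin n → ℝ) (hxd : ∀ i, xd i = 1 ∨ xd i = -1)
    (h1 : ∀ ℓ : Fin m, (∀ c, ℓ ≠ lc c (e c)) → |R.mulVec xd ℓ| ≤ 1)
    (h2 : ∀ c, |R.mulVec xd (lc c (e c))| = 2) :
    ∀ x : Fin n → ℝ, (∀ i, x i = 1 ∨ x i = -1) →
      (∑ ℓ, (R.mulVec xd ℓ) ^ 2 ≤ ∑ ℓ, (R.mulVec x ℓ) ^ 2) ∧
      (∑ i, ∑ j, (if i < j ∧ x i ≠ x j then (Rᵀ * R) i j else 0))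
        ≤ ∑ i, ∑ j, (if i < j ∧ xd i ≠ xd j then (Rᵀ * R) i j else 0) := by
  intro x hx
  -- notation
  set L : Fin m → Finset (Fin n) := fun ℓ => Finset.univ.filter (fun v => R ℓ v = 1)
    with hL
  set p : Fin m → ℝ := fun ℓ => if Odd (L ℓ).card then 1 else 0 with hp
  have hpnonneg : ∀ ℓ, 0 ≤ p ℓ := by
    intro ℓ; rw [hp]; dsimp only; split <;> norm_num
  -- every weak (cycle) label has support of size 2
  have hne2 : ∀ c (i : Fin (k c)), vc c i ≠ vc c (finRotate (k c) i) := by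
    intro c i h
    exact stmt19_rot_ne (by have := (hk c).2; omega) i (hvinj c h.symm)
  have hcard2 : ∀ c (i : Fin (k c)), (L (lc c i)).card = 2 := by
    intro c i
    rw [hL]; dsimp only; rw [hweak c i]
    rw [Finset.card_insert_of_notMem (by rw [Finset.mem_singleton]; exact hne2 c i), Finset.card_singleton]
  have hpweak : ∀ c (i : Fin (k c)), p (lc c i) = 0 := by
    intro c i
    rw [hp]; dsimp only
    rw [if_neg (by rw [hcard2 c i]; decide)]
  -- value on a weak label
  have hweakval : ∀ (y : Fin n → ℝ) c (i : Fin (k c)),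
      R.mulVec y (lc c i) = y (vc c i) + y (vc c (finRotate (k c) i)) := by
    intro y c i
    rw [stmt19_rowval R hR, hweak c i, Finset.sum_pair (hne2 c i)]
  -- lower bound for any ±1 vector pointwise
  have hplb : ∀ ℓ, p ℓ ≤ (R.mulVec x ℓ) ^ 2 := by
    intro ℓ
    rw [hp]; dsimp only
    split
    · rw [stmt19_rowval R hR]
      exact stmt19_odd_lb x hx (L ℓ) (by assumption)
    · exact sq_nonneg _
  -- the removed-label set G
  have ginj : Function.Injective (fun c => lc c (e c)) := by
    intro c c' h
    exact hldisj c c' (e c) (e c') h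
  set G : Finset (Fin m) := Finset.univ.image (fun c => lc c (e c)) with hG
  have hGcard : G.card = t := by
    rw [hG, Finset.card_image_of_injective _ ginj, Finset.card_univ, Fintype.card_fin]
  -- upper bound for xd : sum over G is 4t
  have hGsum : ∑ ℓ ∈ G, (R.mulVec xd ℓ) ^ 2 = 4 * t := by
    rw [hG, Finset.sum_image (fun a _ b _ h => ginj h)]
    have : ∀ c : Fin t, (R.mulVec xd (lc c (e c))) ^ 2 = 4 := by
      intro c
      rw [← sq_abs, h2 c]; norm_num
    rw [Finset.sum_congr rfl (fun c _ => this c)]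
    simp [mul_comm]
  have hGub : ∀ ℓ ∈ Finset.univ \ G, (R.mulVec xd ℓ) ^ 2 ≤ p ℓ := by
    intro ℓ hℓ
    have hnotin : ∀ c, ℓ ≠ lc c (e c) := by
      intro c h
      rw [Finset.mem_sdiff] at hℓ
      exact hℓ.2 (by rw [hG]; exact Finset.mem_image.mpr ⟨c, Finset.mem_univ c, h.symm⟩)
    have habs := h1 ℓ hnotin
    rw [hp]; dsimp only
    split
    · rw [← sq_abs]
      calc |R.mulVec xd ℓ| ^ 2 ≤ 1 ^ 2 := by
            apply pow_le_pow_left₀ (abs_nonneg _) habs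
      _ = 1 := one_pow 2
    · rw [stmt19_rowval R hR] at habs ⊢
      rw [stmt19_even_zero xd hxd (L ℓ) (by assumption) habs]
      norm_num
  have hxdub : ∑ ℓ, (R.mulVec xd ℓ) ^ 2 ≤ 4 * t + ∑ ℓ, p ℓ := by
    rw [← Finset.sum_sdiff (Finset.subset_univ G), hGsum]
    have h1' : ∑ ℓ ∈ Finset.univ \ G, (R.mulVec xd ℓ) ^ 2
        ≤ ∑ ℓ ∈ Finset.univ \ G, p ℓ := Finset.sum_le_sum hGub
    have h2' : ∑ ℓ ∈ Finset.univ \ G, p ℓ ≤ ∑ ℓ, p ℓ :=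
      Finset.sum_le_sum_of_subset_of_nonneg (Finset.sdiff_subset)
        (fun ℓ _ _ => hpnonneg ℓ)
    linarith
  -- lower bound for x : each cycle has a monochromatic edge
  have hchoice : ∀ c : Fin t, ∃ i : Fin (k c),
      x (vc c i) = x (vc c (finRotate (k c) i)) :=
    fun c => stmt19_cycle (hk c).1 (fun i => x (vc c i)) (fun i => hx _)
  choose f hf using hchoice
  have finj : Function.Injective (fun c => lc c (f c)) := by
    intro c c' h
    exact hldisj c c' (f c) (f c') h
  set F : Finset (Fin m) := Finset.univ.image (fun c => lc c (f c)) with hF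
  have hFsum : ∑ ℓ ∈ F, (R.mulVec x ℓ) ^ 2 = 4 * t := by
    rw [hF, Finset.sum_image (fun a _ b _ h => finj h)]
    have : ∀ c : Fin t, (R.mulVec x (lc c (f c))) ^ 2 = 4 := by
      intro c
      rw [hweakval x c (f c), ← hf c]
      rcases hx (vc c (f c)) with h | h <;> rw [h] <;> norm_num
    rw [Finset.sum_congr rfl (fun c _ => this c)]
    simp [mul_comm]
  have hFp : ∑ ℓ ∈ F, p ℓ = 0 := by
    rw [hF, Finset.sum_image (fun a _ b _ h => finj h)]
    exact Finset.sum_eq_zero (fun c _ => hpweak c (f c))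
  have hxlb : 4 * t + ∑ ℓ, p ℓ ≤ ∑ ℓ, (R.mulVec x ℓ) ^ 2 := by
    rw [← Finset.sum_sdiff (Finset.subset_univ F)
        (f := fun ℓ => (R.mulVec x ℓ) ^ 2), hFsum]
    rw [← Finset.sum_sdiff (Finset.subset_univ F) (f := p), hFp]
    have : ∑ ℓ ∈ Finset.univ \ F, p ℓ
        ≤ ∑ ℓ ∈ Finset.univ \ F, (R.mulVec x ℓ) ^ 2 :=
      Finset.sum_le_sum (fun ℓ _ => hplb ℓ)
    linarith
  have part1 : ∑ ℓ, (R.mulVec xd ℓ) ^ 2 ≤ ∑ ℓ, (R.mulVec x ℓ) ^ 2 :=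
    le_trans hxdub hxlb
  refine ⟨part1, ?_⟩
  have id1 := stmt19_cut_id R xd hxd
  have id2 := stmt19_cut_id R x hx
  linarith
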